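/- In a delicate MDP with at least two timesteps after the decision, the node S_1 is a recanting witness for the path-specific effect of A_0 on total return along the subgraph G' removing edges into delicate states: A_0 → S_1 is in G, the path S_1 → Z_2 → R_2 is in G but not G', and the path S_1 → S_2 → R_2 is in both G and G'; hence by the recanting-witness criterion the multi-step path-specific objective is not experimentally identifiable. -/

import Mathlib

open Relation

attribute [local instance] Classical.propDecidable

/-! Vertices of the delicate `T`-step MDP CID, encoded as `Fin 4 × Fin (T+1)`:
kind `0` = robust state `S_t`, kind `1` = delicate state `Z_t`, kind `2` = action `A_t`,
kind `3` = reward `R_t`. -/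

/-- Edges of the delicate MDP CID (including information links into actions). -/
def e9 (T : ℕ) (v w : Fin 4 × Fin (T + 1)) : Prop :=
  (v.1.val ≤ 2 ∧ w.1.val = 0 ∧ w.2.val = v.2.val + 1) ∨                -- S,Z,A → S'
  (v.1.val ≤ 2 ∧ w.1.val = 1 ∧ w.2.val = v.2.val + 1) ∨                -- S,Z,A → Z'
  (v.1.val ≤ 1 ∧ w.1.val = 3 ∧ w.2.val = v.2.val ∧ 1 ≤ v.2.val) ∨      -- S_t,Z_t → R_t
  (v.1.val = 2 ∧ w.1.val = 3 ∧ w.2.val = v.2.val + 1) ∨                -- A_t → R_{t+1}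
  ((v.1.val = 0 ∨ v.1.val = 1 ∨ v.1.val = 3) ∧ w.1.val = 2 ∧
    w.2.val = v.2.val ∧ v.2.val + 1 ≤ T)                               -- S,Z,R → A_t

/-- The subgraph `G'` removing `A_t → Z_{t+1}` and `S_t → Z_{t+1}`. -/
def e9' (T : ℕ) (v w : Fin 4 × Fin (T + 1)) : Prop :=
  e9 T v w ∧ ¬ (w.1.val = 1 ∧ (v.1.val = 0 ∨ v.1.val = 2))

/-- A Markovian structural causal model over the DAG `E` on vertex set `V`. -/
structure MSCM (V : Type) [Fintype V] [DecidableEq V] (E : V → V → Prop) where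
  Ω : V → Type
  fin : ∀ v, Fintype (Ω v)
  P : ∀ v, Ω v → ℝ
  Ppos : ∀ v ω, 0 ≤ P v ω
  Psum : ∀ v, ((fin v).elems.sum (P v)) = 1
  f : ∀ v : V, (V → ℝ) → Ω v → ℝ
  hpar : ∀ v g g' ω, (∀ p, E p v → g p = g' p) → f v g ω = f v g' ω
  vals : (V → Option ℝ) → (∀ v, Ω v) → V → ℝ
  hvals : ∀ σ ω v, vals σ ω v = (σ v).getD (f v (vals σ ω) (ω v))

namespace MSCM

variable {V : Type} [Fintype V] [DecidableEq V] {E : V → V → Prop}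

noncomputable def jointP (M : MSCM V E) (ω : ∀ v, M.Ω v) : ℝ := ∏ v, M.P v (ω v)

noncomputable def exp (M : MSCM V E) (h : (∀ v, M.Ω v) → ℝ) : ℝ :=
  letI := M.fin; ∑ ω, M.jointP ω * h ω

def doX (X : V) (x : ℝ) : V → Option ℝ := fun v => if v = X then some x else none

noncomputable def intervDist (M : MSCM V E) (σ : V → Option ℝ) (g : V → ℝ) : ℝ :=
  letI := M.fin; ∑ ω, if M.vals σ ω = g then M.jointP ω else 0

/-- `w` solves Pearl's Definition-P8 modified model along `E'` under `do(X = x)`. -/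
def PSESol (M : MSCM V E) (E' : V → V → Prop) (X : V) (x xbar : ℝ)
    (w : (∀ v, M.Ω v) → V → ℝ) : Prop :=
  ∀ ω v, w ω v =
    if v = X then x
    else M.f v
      (fun p => if E p v ∧ ¬ E' p v then M.vals (doX X xbar) ω p else w ω p) (ω v)

end MSCM

/-- A recanting witness `W` for `(X, Y, G, G')`. -/
def RecantingWitness {V : Type} (E E' : V → V → Prop) (X Y : V) : Prop :=
  ∃ W : V,
    TransGen E X W ∧
    (∃ l : List V, List.Chain E W l ∧ l.getLast? = some Y ∧ ¬ List.Chain E' W l) ∧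
    (∃ l : List V, List.Chain E' W l ∧ l.getLast? = some Y)

namespace S9

abbrev Vtx (T : ℕ) := Fin 4 × Fin (T + 1)

variable (T : ℕ) (hT : 2 ≤ T)

theorem lt1 (n : ℕ) (hn : 2 ≤ n) : 1 < n + 1 := by omega
theorem lt2 (n : ℕ) (hn : 2 ≤ n) : 2 < n + 1 := by omega

def nA0 : Vtx T := ((2 : Fin 4), (0 : Fin (T + 1)))
def nS1 : Vtx T := ((0 : Fin 4), (⟨1, lt1 T hT⟩ : Fin (T + 1)))
def nZ2 : Vtx T := ((1 : Fin 4), (⟨2, lt2 T hT⟩ : Fin (T + 1)))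
def nS2 : Vtx T := ((0 : Fin 4), (⟨2, lt2 T hT⟩ : Fin (T + 1)))
def nR2 : Vtx T := ((3 : Fin 4), (⟨2, lt2 T hT⟩ : Fin (T + 1)))

lemma fst_ne {α β : Type*} {a b : α × β} (h : a.1 ≠ b.1) : a ≠ b :=
  fun e => h (congrArg Prod.fst e)

lemma snd_ne {a b : Vtx T} (h : a.2.val ≠ b.2.val) : a ≠ b :=
  fun e => h (congrArg (fun p : Vtx T => p.2.val) e)

lemma A0_ne_S1 : nA0 T ≠ nS1 T hT := fst_ne (by simp [nA0, nS1, nZ2, nS2, nR2])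
lemma A0_ne_Z2 : nA0 T ≠ nZ2 T hT := fst_ne (by simp [nA0, nS1, nZ2, nS2, nR2])
lemma A0_ne_S2 : nA0 T ≠ nS2 T hT := fst_ne (by simp [nA0, nS1, nZ2, nS2, nR2])
lemma A0_ne_R2 : nA0 T ≠ nR2 T hT := fst_ne (by simp [nA0, nS1, nZ2, nS2, nR2])
lemma S1_ne_Z2 : nS1 T hT ≠ nZ2 T hT := fst_ne (by simp [nA0, nS1, nZ2, nS2, nR2])
lemma S1_ne_S2 : nS1 T hT ≠ nS2 T hT := snd_ne T (by simp [nA0, nS1, nZ2, nS2, nR2])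
lemma S1_ne_R2 : nS1 T hT ≠ nR2 T hT := fst_ne (by simp [nA0, nS1, nZ2, nS2, nR2])
lemma Z2_ne_S2 : nZ2 T hT ≠ nS2 T hT := fst_ne (by simp [nA0, nS1, nZ2, nS2, nR2])
lemma Z2_ne_R2 : nZ2 T hT ≠ nR2 T hT := fst_ne (by simp [nA0, nS1, nZ2, nS2, nR2])
lemma S2_ne_R2 : nS2 T hT ≠ nR2 T hT := fst_ne (by simp [nA0, nS1, nZ2, nS2, nR2])

lemma eA0S1 : e9 T (nA0 T) (nS1 T hT) := Or.inl (by refine ⟨by simp [nA0, nS1, nZ2, nS2, nR2], by simp [nA0, nS1, nZ2, nS2, nR2], ?_⟩; simp [nA0, nS1])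
lemma eS1Z2 : e9 T (nS1 T hT) (nZ2 T hT) := Or.inr (Or.inl ⟨by simp [nA0, nS1, nZ2, nS2, nR2], by simp [nA0, nS1, nZ2, nS2, nR2], by simp [nS1, nZ2]⟩)
lemma eS1S2 : e9 T (nS1 T hT) (nS2 T hT) := Or.inl ⟨by simp [nA0, nS1, nZ2, nS2, nR2], by simp [nA0, nS1, nZ2, nS2, nR2], by simp [nS1, nS2]⟩
lemma eZ2R2 : e9 T (nZ2 T hT) (nR2 T hT) :=
  Or.inr (Or.inr (Or.inl ⟨by simp [nA0, nS1, nZ2, nS2, nR2], rfl, by simp [nZ2, nR2], by simp [nA0, nS1, nZ2, nS2, nR2]⟩))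
lemma eS2R2 : e9 T (nS2 T hT) (nR2 T hT) :=
  Or.inr (Or.inr (Or.inl ⟨by simp [nA0, nS1, nZ2, nS2, nR2], rfl, by simp [nS2, nR2], by simp [nA0, nS1, nZ2, nS2, nR2]⟩))

def sg (b : Bool) : ℝ := if b then 1 else -1

lemma sg_mul_self (b : Bool) : sg b * sg b = 1 := by cases b <;> simp [sg]

lemma sg_not (b : Bool) : sg (!b) = - sg b := by cases b <;> simp [sg]

/-- the mechanisms; `c` is the S1-transform (`id` for M1, `abs` for M2). -/
noncomputable def mf (c : ℝ → ℝ) (v : Vtx T) (g : Vtx T → ℝ) (b : Bool) : ℝ :=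
  if v = nS1 T hT then c (g (nA0 T)) * sg b
  else if v = nZ2 T hT then g (nS1 T hT)
  else if v = nS2 T hT then g (nS1 T hT)
  else if v = nR2 T hT then g (nZ2 T hT) * g (nS2 T hT)
  else 0

noncomputable def a0v (σ : Vtx T → Option ℝ) : ℝ := (σ (nA0 T)).getD 0

noncomputable def s1v (c : ℝ → ℝ) (σ : Vtx T → Option ℝ) (ω : Vtx T → Bool) : ℝ :=
  (σ (nS1 T hT)).getD (c (a0v T σ) * sg (ω (nS1 T hT)))

noncomputable def mvals (c : ℝ → ℝ) (σ : Vtx T → Option ℝ) (ω : Vtx T → Bool) (v : Vtx T) : ℝ :=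
  if v = nA0 T then a0v T σ
  else if v = nS1 T hT then s1v T hT c σ ω
  else if v = nZ2 T hT then (σ v).getD (s1v T hT c σ ω)
  else if v = nS2 T hT then (σ v).getD (s1v T hT c σ ω)
  else if v = nR2 T hT then
    (σ v).getD (((σ (nZ2 T hT)).getD (s1v T hT c σ ω)) * ((σ (nS2 T hT)).getD (s1v T hT c σ ω)))
  else (σ v).getD 0

-- point lemmas for mvals
lemma mvals_A0 (c σ ω) : mvals T hT c σ ω (nA0 T) = a0v T σ := by
  rw [mvals, if_pos rfl]
lemma mvals_S1 (c σ ω) : mvals T hT c σ ω (nS1 T hT) = s1v T hT c σ ω := by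
  rw [mvals, if_neg (A0_ne_S1 T hT).symm, if_pos rfl]
lemma mvals_Z2 (c σ ω) : mvals T hT c σ ω (nZ2 T hT) = (σ (nZ2 T hT)).getD (s1v T hT c σ ω) := by
  rw [mvals, if_neg (A0_ne_Z2 T hT).symm, if_neg (S1_ne_Z2 T hT).symm, if_pos rfl]
lemma mvals_S2 (c σ ω) : mvals T hT c σ ω (nS2 T hT) = (σ (nS2 T hT)).getD (s1v T hT c σ ω) := by
  rw [mvals, if_neg (A0_ne_S2 T hT).symm, if_neg (S1_ne_S2 T hT).symm,
    if_neg (Z2_ne_S2 T hT).symm, if_pos rfl]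
lemma mvals_R2 (c σ ω) : mvals T hT c σ ω (nR2 T hT) =
    (σ (nR2 T hT)).getD (((σ (nZ2 T hT)).getD (s1v T hT c σ ω)) *
      ((σ (nS2 T hT)).getD (s1v T hT c σ ω))) := by
  rw [mvals, if_neg (A0_ne_R2 T hT).symm, if_neg (S1_ne_R2 T hT).symm,
    if_neg (Z2_ne_R2 T hT).symm, if_neg (S2_ne_R2 T hT).symm, if_pos rfl]
lemma mvals_other (c σ ω v) (h0 : v ≠ nA0 T) (h1 : v ≠ nS1 T hT) (h2 : v ≠ nZ2 T hT)
    (h3 : v ≠ nS2 T hT) (h4 : v ≠ nR2 T hT) : mvals T hT c σ ω v = (σ v).getD 0 := by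
  rw [mvals, if_neg h0, if_neg h1, if_neg h2, if_neg h3, if_neg h4]

/-- the structural model with parameter `c`. -/
noncomputable def M (c : ℝ → ℝ) : MSCM (Vtx T) (e9 T) where
  Ω := fun _ => Bool
  fin := fun _ => inferInstance
  P := fun _ _ => (1 : ℝ) / 2
  Ppos := fun _ _ => by norm_num
  Psum := fun v => by
    show ∑ _b : Bool, (1 : ℝ) / 2 = 1
    simp
  f := mf T hT c
  hpar := by
    intro v g g' b h
    unfold mf
    split_ifs with h1 h2 h3 h4
    · rw [h (nA0 T) (by rw [h1]; exact eA0S1 T hT)]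
    · rw [h (nS1 T hT) (by rw [h2]; exact eS1Z2 T hT)]
    · rw [h (nS1 T hT) (by rw [h3]; exact eS1S2 T hT)]
    · rw [h (nZ2 T hT) (by rw [h4]; exact eZ2R2 T hT),
        h (nS2 T hT) (by rw [h4]; exact eS2R2 T hT)]
    · rfl
  vals := mvals T hT c
  hvals := by
    intro σ ω v
    by_cases h0 : v = nA0 T
    · subst h0
      rw [mvals_A0]
      have : mf T hT c (nA0 T) (mvals T hT c σ ω) (ω (nA0 T)) = 0 := by
        rw [mf, if_neg (A0_ne_S1 T hT), if_neg (A0_ne_Z2 T hT), if_neg (A0_ne_S2 T hT),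
          if_neg (A0_ne_R2 T hT)]
      rw [this]; rfl
    by_cases h1 : v = nS1 T hT
    · subst h1
      rw [mvals_S1, mf, if_pos rfl, mvals_A0]; rfl
    by_cases h2 : v = nZ2 T hT
    · subst h2
      rw [mvals_Z2, mf, if_neg h1, if_pos rfl, mvals_S1]
    by_cases h3 : v = nS2 T hT
    · subst h3
      rw [mvals_S2, mf, if_neg h1, if_neg h2, if_pos rfl, mvals_S1]
    by_cases h4 : v = nR2 T hT
    · subst h4
      rw [mvals_R2, mf, if_neg h1, if_neg h2, if_neg h3, if_pos rfl, mvals_Z2, mvals_S2]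
    · rw [mvals_other T hT c σ ω v h0 h1 h2 h3 h4, mf,
        if_neg h1, if_neg h2, if_neg h3, if_neg h4]

-- point lemmas for mf
lemma mf_S1 (c g b) : mf T hT c (nS1 T hT) g b = c (g (nA0 T)) * sg b := by
  rw [mf, if_pos rfl]
lemma mf_Z2 (c g b) : mf T hT c (nZ2 T hT) g b = g (nS1 T hT) := by
  rw [mf, if_neg (S1_ne_Z2 T hT).symm, if_pos rfl]
lemma mf_S2 (c g b) : mf T hT c (nS2 T hT) g b = g (nS1 T hT) := by
  rw [mf, if_neg (S1_ne_S2 T hT).symm, if_neg (Z2_ne_S2 T hT).symm, if_pos rfl]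
lemma mf_R2 (c g b) : mf T hT c (nR2 T hT) g b = g (nZ2 T hT) * g (nS2 T hT) := by
  rw [mf, if_neg (S1_ne_R2 T hT).symm, if_neg (Z2_ne_R2 T hT).symm,
    if_neg (S2_ne_R2 T hT).symm, if_pos rfl]
lemma mf_other (c g b v) (h1 : v ≠ nS1 T hT) (h2 : v ≠ nZ2 T hT)
    (h3 : v ≠ nS2 T hT) (h4 : v ≠ nR2 T hT) : mf T hT c v g b = 0 := by
  rw [mf, if_neg h1, if_neg h2, if_neg h3, if_neg h4]

/-- the explicit solution of the modified (path-specific) model with `x = 1`, `xbar = -1`. -/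
noncomputable def mw (c : ℝ → ℝ) (ω : Vtx T → Bool) (v : Vtx T) : ℝ :=
  if v = nA0 T then 1
  else if v = nS1 T hT then c 1 * sg (ω (nS1 T hT))
  else if v = nZ2 T hT then c (-1) * sg (ω (nS1 T hT))
  else if v = nS2 T hT then c 1 * sg (ω (nS1 T hT))
  else if v = nR2 T hT then (c (-1) * sg (ω (nS1 T hT))) * (c 1 * sg (ω (nS1 T hT)))
  else 0

lemma mw_A0 (c ω) : mw T hT c ω (nA0 T) = 1 := by rw [mw, if_pos rfl]
lemma mw_S1 (c ω) : mw T hT c ω (nS1 T hT) = c 1 * sg (ω (nS1 T hT)) := by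
  rw [mw, if_neg (A0_ne_S1 T hT).symm, if_pos rfl]
lemma mw_Z2 (c ω) : mw T hT c ω (nZ2 T hT) = c (-1) * sg (ω (nS1 T hT)) := by
  rw [mw, if_neg (A0_ne_Z2 T hT).symm, if_neg (S1_ne_Z2 T hT).symm, if_pos rfl]
lemma mw_S2 (c ω) : mw T hT c ω (nS2 T hT) = c 1 * sg (ω (nS1 T hT)) := by
  rw [mw, if_neg (A0_ne_S2 T hT).symm, if_neg (S1_ne_S2 T hT).symm,
    if_neg (Z2_ne_S2 T hT).symm, if_pos rfl]
lemma mw_R2 (c ω) : mw T hT c ω (nR2 T hT)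
    = (c (-1) * sg (ω (nS1 T hT))) * (c 1 * sg (ω (nS1 T hT))) := by
  rw [mw, if_neg (A0_ne_R2 T hT).symm, if_neg (S1_ne_R2 T hT).symm,
    if_neg (Z2_ne_R2 T hT).symm, if_neg (S2_ne_R2 T hT).symm, if_pos rfl]
lemma mw_other (c ω v) (h0 : v ≠ nA0 T) (h1 : v ≠ nS1 T hT) (h2 : v ≠ nZ2 T hT)
    (h3 : v ≠ nS2 T hT) (h4 : v ≠ nR2 T hT) : mw T hT c ω v = 0 := by
  rw [mw, if_neg h0, if_neg h1, if_neg h2, if_neg h3, if_neg h4]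

lemma s1v_xbar (c ω) : s1v T hT c (MSCM.doX (nA0 T) (-1)) ω = c (-1) * sg (ω (nS1 T hT)) := by
  simp [s1v, a0v, MSCM.doX, (A0_ne_S1 T hT).symm]

lemma pse (c : ℝ → ℝ) : (M T hT c).PSESol (e9' T) (nA0 T) 1 (-1) (mw T hT c) := by
  have hc1 : ¬(e9 T (nA0 T) (nS1 T hT) ∧ ¬ e9' T (nA0 T) (nS1 T hT)) :=
    fun h => h.2 ⟨h.1, fun hh => absurd (show (0:ℕ) = 1 from hh.1) (by norm_num)⟩
  have hc2 : e9 T (nS1 T hT) (nZ2 T hT) ∧ ¬ e9' T (nS1 T hT) (nZ2 T hT) :=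
    ⟨eS1Z2 T hT, fun h => h.2 ⟨show (1:ℕ) = 1 from rfl, Or.inl (show (0:ℕ) = 0 from rfl)⟩⟩
  have hc3 : ¬(e9 T (nS1 T hT) (nS2 T hT) ∧ ¬ e9' T (nS1 T hT) (nS2 T hT)) :=
    fun h => h.2 ⟨h.1, fun hh => absurd (show (0:ℕ) = 1 from hh.1) (by norm_num)⟩
  have hc4 : ¬(e9 T (nZ2 T hT) (nR2 T hT) ∧ ¬ e9' T (nZ2 T hT) (nR2 T hT)) :=
    fun h => h.2 ⟨h.1, fun hh => absurd (show (3:ℕ) = 1 from hh.1) (by norm_num)⟩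
  have hc5 : ¬(e9 T (nS2 T hT) (nR2 T hT) ∧ ¬ e9' T (nS2 T hT) (nR2 T hT)) :=
    fun h => h.2 ⟨h.1, fun hh => absurd (show (3:ℕ) = 1 from hh.1) (by norm_num)⟩
  intro ω v
  change Vtx T → Bool at ω
  have hf : (M T hT c).f = mf T hT c := rfl
  have hvls : (M T hT c).vals = mvals T hT c := rfl
  rw [hf, hvls]
  by_cases h0 : v = nA0 T
  · subst h0; rw [mw_A0, if_pos rfl]
  rw [if_neg h0]
  by_cases h1 : v = nS1 T hT
  · subst h1
    simp only [mf_S1]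
    rw [if_neg hc1, mw_A0, mw_S1]
  by_cases h2 : v = nZ2 T hT
  · subst h2
    simp only [mf_Z2]
    rw [if_pos hc2, mvals_S1, s1v_xbar, mw_Z2]
  by_cases h3 : v = nS2 T hT
  · subst h3
    simp only [mf_S2]
    rw [if_neg hc3, mw_S1, mw_S2]
  by_cases h4 : v = nR2 T hT
  · subst h4
    simp only [mf_R2]
    rw [if_neg hc4, if_neg hc5, mw_Z2, mw_S2, mw_R2]
  · rw [mw_other T hT c ω v h0 h1 h2 h3 h4, mf_other T hT c _ _ v h1 h2 h3 h4]

/-- flip the `S1` noise bit when the intervened `A0` value is negative. -/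
noncomputable def flp (σ : Vtx T → Option ℝ) (ω : Vtx T → Bool) : Vtx T → Bool :=
  fun v => if v = nS1 T hT ∧ a0v T σ < 0 then !(ω v) else ω v

lemma flp_invol (σ) : Function.Involutive (flp T hT σ) := by
  intro ω; funext v
  by_cases h : v = nS1 T hT ∧ a0v T σ < 0 <;> simp [flp, h]

lemma s1v_flp (σ ω) : s1v T hT (fun x => |x|) σ ω = s1v T hT id σ (flp T hT σ ω) := by
  rw [s1v, s1v, flp]
  by_cases ha : a0v T σ < 0
  · rw [if_pos ⟨rfl, ha⟩, sg_not, abs_of_neg ha]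
    congr 1
    simp [mul_comm]
  · rw [if_neg (fun h => ha h.2), abs_of_nonneg (not_lt.1 ha)]
    rfl

lemma mvals_flp (σ ω) : mvals T hT (fun x => |x|) σ ω = mvals T hT id σ (flp T hT σ ω) := by
  funext v
  rw [mvals, mvals, s1v_flp]

lemma jointP_const (c : ℝ → ℝ) (ω : ∀ v, (M T hT c).Ω v) :
    (M T hT c).jointP ω = ∏ _v : Vtx T, ((1:ℝ)/2) := rfl

lemma interv_eq (σ g) : (M T hT id).intervDist σ g = (M T hT (fun x => |x|)).intervDist σ g := by
  show (∑ ω : Vtx T → Bool, if mvals T hT id σ ω = g then (M T hT id).jointP ω else 0)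
      = ∑ ω : Vtx T → Bool, if mvals T hT (fun x => |x|) σ ω = g then
          (M T hT (fun x => |x|)).jointP ω else 0
  simp only [jointP_const, mvals_flp]
  exact (Equiv.sum_comp ((flp_invol T hT σ).toPerm _)
    (fun ω => if mvals T hT id σ ω = g then (∏ _v : Vtx T, ((1:ℝ)/2)) else 0)).symm

lemma row3_ne_A0 (t : Fin (T+1)) : ((3:Fin 4), t) ≠ nA0 T := fst_ne (by simp [nA0])
lemma row3_ne_S1 (t : Fin (T+1)) : ((3:Fin 4), t) ≠ nS1 T hT := fst_ne (by simp [nS1])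
lemma row3_ne_Z2 (t : Fin (T+1)) : ((3:Fin 4), t) ≠ nZ2 T hT := fst_ne (by simp [nZ2])
lemma row3_ne_S2 (t : Fin (T+1)) : ((3:Fin 4), t) ≠ nS2 T hT := fst_ne (by simp [nS2])
lemma row3_ne_R2 (t : Fin (T+1)) (ht : t.val ≠ 2) : ((3:Fin 4), t) ≠ nR2 T hT :=
  snd_ne T ht

lemma sum_mw (c ω) :
    (∑ t : Fin (T+1), if 1 ≤ t.val then mw T hT c ω ((3:Fin 4), t) else 0)
      = mw T hT c ω (nR2 T hT) := by
  rw [Finset.sum_eq_single_of_mem (⟨2, by omega⟩ : Fin (T+1)) (Finset.mem_univ _) ?_]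
  · rw [if_pos (by norm_num)]; rfl
  · intro b _ hb
    by_cases h1 : 1 ≤ b.val
    · rw [if_pos h1, mw_other T hT c ω _ (row3_ne_A0 T b) (row3_ne_S1 T hT b)
        (row3_ne_Z2 T hT b) (row3_ne_S2 T hT b)
        (row3_ne_R2 T hT b (fun hh => hb (Fin.ext hh)))]
    · rw [if_neg h1]

lemma sum_xvals (c ω) :
    (∑ t : Fin (T+1), if 1 ≤ t.val then
        mvals T hT c (MSCM.doX (nA0 T) (-1)) ω ((3:Fin 4), t) else 0)
      = mvals T hT c (MSCM.doX (nA0 T) (-1)) ω (nR2 T hT) := by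
  rw [Finset.sum_eq_single_of_mem (⟨2, by omega⟩ : Fin (T+1)) (Finset.mem_univ _) ?_]
  · rw [if_pos (by norm_num)]; rfl
  · intro b _ hb
    by_cases h1 : 1 ≤ b.val
    · rw [if_pos h1, mvals_other T hT c _ ω _ (row3_ne_A0 T b) (row3_ne_S1 T hT b)
        (row3_ne_Z2 T hT b) (row3_ne_S2 T hT b)
        (row3_ne_R2 T hT b (fun hh => hb (Fin.ext hh)))]
      simp [MSCM.doX, row3_ne_A0 T b]
    · rw [if_neg h1]

lemma xvals_R2 (c ω) : mvals T hT c (MSCM.doX (nA0 T) (-1)) ω (nR2 T hT)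
    = (c (-1) * sg (ω (nS1 T hT))) * (c (-1) * sg (ω (nS1 T hT))) := by
  rw [mvals_R2, s1v_xbar]
  simp [MSCM.doX, (A0_ne_Z2 T hT).symm, (A0_ne_S2 T hT).symm, (A0_ne_R2 T hT).symm]

lemma obj_id (ω : Vtx T → Bool) :
    (∑ t : Fin (T+1), if 1 ≤ t.val then mw T hT id ω ((3:Fin 4), t) else 0) -
    (∑ t : Fin (T+1), if 1 ≤ t.val then
        mvals T hT id (MSCM.doX (nA0 T) (-1)) ω ((3:Fin 4), t) else 0) = -2 := by
  rw [sum_mw, sum_xvals, xvals_R2, mw_R2]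
  have := sg_mul_self (ω (nS1 T hT))
  simp only [id]
  nlinarith [this]

lemma obj_abs (ω : Vtx T → Bool) :
    (∑ t : Fin (T+1), if 1 ≤ t.val then mw T hT (fun x => |x|) ω ((3:Fin 4), t) else 0) -
    (∑ t : Fin (T+1), if 1 ≤ t.val then
        mvals T hT (fun x => |x|) (MSCM.doX (nA0 T) (-1)) ω ((3:Fin 4), t) else 0) = 0 := by
  rw [sum_mw, sum_xvals, xvals_R2, mw_R2]
  have := sg_mul_self (ω (nS1 T hT))
  have h1 : |(-1 : ℝ)| = 1 := by norm_num
  have h2 : |(1 : ℝ)| = 1 := by norm_num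
  rw [h1, h2]
  ring

lemma exp_eval (c : ℝ → ℝ) (k : ℝ) (h : (∀ v, (M T hT c).Ω v) → ℝ)
    (hh : ∀ ω, h ω = k) :
    (M T hT c).exp h
      = (Fintype.card (Vtx T → Bool) : ℝ) * ((∏ _v : Vtx T, ((1:ℝ)/2)) * k) := by
  show (∑ ω : Vtx T → Bool, (M T hT c).jointP ω * h ω) = _
  rw [show (∑ ω : Vtx T → Bool, (M T hT c).jointP ω * h ω) = ∑ _ω : Vtx T → Bool, (∏ _v : Vtx T, ((1:ℝ)/2)) * k from Finset.sum_congr rfl (fun ω _ => by rw [hh ω]; rfl)]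
  rw [Finset.sum_const, nsmul_eq_mul, Finset.card_univ]

end S9

/-- in a delicate MDP with `T ≥ 2`, `S_1` is a recanting witness for the
path-specific effect of `A_0` on the return along the subgraph `G'`: `A_0 → S_1` is in
`G`, the path `S_1 → Z_2 → R_2` is in `G` but not in `G'`, and `S_1 → S_2 → R_2` is in
both; hence by the recanting-witness criterion the multi-step path-specific objective
(the `G'`-specific effect of `A_0` on the total return `Σ_{t≥1} R_t`) is not
experimentally identifiable: two Markovian models can agree on all interventional
distributions and disagree on the path-specific effect. -/
theorem stmt9 (T : ℕ) (hT : 2 ≤ T) :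
    -- with `A0 = (2, 0)`, `S1 = (0, 1)`, `Z2 = (1, 2)`, `S2 = (0, 2)`, `R2 = (3, 2)`
    (e9 T ((2 : Fin 4), (0 : Fin (T + 1))) ((0 : Fin 4), (⟨1, by omega⟩ : Fin (T + 1)))) ∧
    (List.Chain (e9 T) ((0 : Fin 4), (⟨1, by omega⟩ : Fin (T + 1)))
        [((1 : Fin 4), (⟨2, by omega⟩ : Fin (T + 1))),
         ((3 : Fin 4), (⟨2, by omega⟩ : Fin (T + 1)))] ∧
      ¬ List.Chain (e9' T) ((0 : Fin 4), (⟨1, by omega⟩ : Fin (T + 1)))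
        [((1 : Fin 4), (⟨2, by omega⟩ : Fin (T + 1))),
         ((3 : Fin 4), (⟨2, by omega⟩ : Fin (T + 1)))]) ∧
    (List.Chain (e9' T) ((0 : Fin 4), (⟨1, by omega⟩ : Fin (T + 1)))
        [((0 : Fin 4), (⟨2, by omega⟩ : Fin (T + 1))),
         ((3 : Fin 4), (⟨2, by omega⟩ : Fin (T + 1)))] ∧
      List.Chain (e9 T) ((0 : Fin 4), (⟨1, by omega⟩ : Fin (T + 1)))
        [((0 : Fin 4), (⟨2, by omega⟩ : Fin (T + 1))),
         ((3 : Fin 4), (⟨2, by omega⟩ : Fin (T + 1)))]) ∧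
    RecantingWitness (e9 T) (e9' T) ((2 : Fin 4), (0 : Fin (T + 1)))
      ((3 : Fin 4), (⟨2, by omega⟩ : Fin (T + 1))) ∧
    -- non-identifiability of the path-specific effect of A_0 on the total return
    (∃ (x xbar : ℝ) (M1 M2 : MSCM (Fin 4 × Fin (T + 1)) (e9 T))
        (w1 : (∀ v, M1.Ω v) → Fin 4 × Fin (T + 1) → ℝ)
        (w2 : (∀ v, M2.Ω v) → Fin 4 × Fin (T + 1) → ℝ),
      x ≠ xbar ∧
      M1.PSESol (e9' T) ((2 : Fin 4), (0 : Fin (T + 1))) x xbar w1 ∧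
      M2.PSESol (e9' T) ((2 : Fin 4), (0 : Fin (T + 1))) x xbar w2 ∧
      (∀ σ g, M1.intervDist σ g = M2.intervDist σ g) ∧
      M1.exp (fun ω =>
          (∑ t : Fin (T + 1), if 1 ≤ t.val then w1 ω ((3 : Fin 4), t) else 0) -
          (∑ t : Fin (T + 1), if 1 ≤ t.val then
            M1.vals (MSCM.doX ((2 : Fin 4), (0 : Fin (T + 1))) xbar) ω ((3 : Fin 4), t)
            else 0)) ≠
      M2.exp (fun ω =>
          (∑ t : Fin (T + 1), if 1 ≤ t.val then w2 ω ((3 : Fin 4), t) else 0) -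
          (∑ t : Fin (T + 1), if 1 ≤ t.val then
            M2.vals (MSCM.doX ((2 : Fin 4), (0 : Fin (T + 1))) xbar) ω ((3 : Fin 4), t)
            else 0))) := by
  have chain1 : List.Chain (e9 T) (S9.nS1 T hT) [S9.nZ2 T hT, S9.nR2 T hT] :=
    List.Chain.cons (S9.eS1Z2 T hT) (List.Chain.cons (S9.eZ2R2 T hT) List.Chain.nil)
  have nchain1 : ¬ List.Chain (e9' T) (S9.nS1 T hT) [S9.nZ2 T hT, S9.nR2 T hT] := by
    intro h
    cases h with
    | cons_cons h1 _ => exact h1.2 ⟨rfl, Or.inl rfl⟩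
  have chain2' : List.Chain (e9' T) (S9.nS1 T hT) [S9.nS2 T hT, S9.nR2 T hT] :=
    List.Chain.cons
      ⟨S9.eS1S2 T hT, fun hh => absurd (show (0:ℕ) = 1 from hh.1) (by norm_num)⟩
      (List.Chain.cons
        ⟨S9.eS2R2 T hT, fun hh => absurd (show (3:ℕ) = 1 from hh.1) (by norm_num)⟩
        List.Chain.nil)
  have chain2 : List.Chain (e9 T) (S9.nS1 T hT) [S9.nS2 T hT, S9.nR2 T hT] :=
    List.Chain.cons (S9.eS1S2 T hT) (List.Chain.cons (S9.eS2R2 T hT) List.Chain.nil)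
  refine ⟨S9.eA0S1 T hT, ⟨chain1, nchain1⟩, ⟨chain2', chain2⟩,
    ⟨S9.nS1 T hT, Relation.TransGen.single (S9.eA0S1 T hT),
      ⟨[S9.nZ2 T hT, S9.nR2 T hT], chain1, rfl, nchain1⟩,
      ⟨[S9.nS2 T hT, S9.nR2 T hT], chain2', rfl⟩⟩, ?_⟩
  refine ⟨1, -1, S9.M T hT id, S9.M T hT (fun x => |x|),
    S9.mw T hT id, S9.mw T hT (fun x => |x|), by norm_num,
    S9.pse T hT id, S9.pse T hT (fun x => |x|), S9.interv_eq T hT, ?_⟩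
  show (S9.M T hT id).exp (fun ω =>
      (∑ t : Fin (T + 1), if 1 ≤ t.val then S9.mw T hT id ω ((3 : Fin 4), t) else 0) -
      (∑ t : Fin (T + 1), if 1 ≤ t.val then
        S9.mvals T hT id (MSCM.doX (S9.nA0 T) (-1)) ω ((3 : Fin 4), t) else 0)) ≠
    (S9.M T hT (fun x => |x|)).exp (fun ω =>
      (∑ t : Fin (T + 1), if 1 ≤ t.val then S9.mw T hT (fun x => |x|) ω ((3 : Fin 4), t) else 0) -
      (∑ t : Fin (T + 1), if 1 ≤ t.val then
        S9.mvals T hT (fun x => |x|) (MSCM.doX (S9.nA0 T) (-1)) ω ((3 : Fin 4), t) else 0))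
  rw [S9.exp_eval T hT id (-2) _ (fun ω => S9.obj_id T hT ω),
    S9.exp_eval T hT (fun x => |x|) 0 _ (fun ω => S9.obj_abs T hT ω)]
  have hN : (0:ℝ) < (Fintype.card (S9.Vtx T → Bool) : ℝ) := by
    exact_mod_cast Fintype.card_pos
  have hc0 : (0:ℝ) < ∏ _v : S9.Vtx T, ((1:ℝ)/2) :=
    Finset.prod_pos (fun _ _ => by norm_num)
  simp only [mul_zero]
  exact ne_of_lt (by nlinarith)
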